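/- Suppose g satisfies the hard-core assumptions with constant a = c < 1, and define r(m,n) = sup_{(x₁,…,xₘ)} sup_{Y₁,…,Yₙ ∈ C} ∑_{y₁∈Y₁}⋯∑_{yₙ∈Yₙ} |φ̃_{(x₁,…,xₘ)}(y₁,…,yₙ)|. Then there exists a constant q₁ (depending only on c and the dimension) such that r(m,n) ≤ n! · q₁^{m+n} for all m, n. -/

import Mathlib

open Finset Metric

noncomputable section

def subseqVals {d n : ℕ} (Y : Fin n → EuclideanSpace ℝ (Fin d)) (S : Finset (Fin n)) :
    Fin S.card → EuclideanSpace ℝ (Fin d) :=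
  fun i => Y ((S.orderIsoOfFin rfl i : Fin n))



lemma packing (d : ℕ) : ∃ N : ℕ, ∀ (Y : Finset (EuclideanSpace ℝ (Fin d))) (x : EuclideanSpace ℝ (Fin d)),
    (∀ u ∈ Y, ∀ v ∈ Y, u ≠ v → 1 ≤ dist u v) →
    (Y.filter (fun y => dist y x < 1)).card ≤ N := by
  classical
  set E := EuclideanSpace ℝ (Fin d)
  have hcomp : IsCompact (closedBall (0:E) 1) := isCompact_closedBall _ _
  obtain ⟨t, ht⟩ := hcomp.elim_finite_subcover (fun z : E => ball z (1/2))
    (fun z => isOpen_ball) (fun z hz => Set.mem_iUnion.2 ⟨z, by simp⟩)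
  refine ⟨t.card, fun Y x hsep => ?_⟩
  have hmem : ∀ y ∈ Y.filter (fun y => dist y x < 1), ∃ z ∈ t, y - x ∈ ball z (1/2) := by
    intro y hy
    have hy' : y - x ∈ closedBall (0:E) 1 := by
      simp only [Finset.mem_filter] at hy
      rw [mem_closedBall]
      calc dist (y - x) 0 = dist (y - x) (x - x) := by rw [sub_self]
      _ = dist y x := dist_sub_right _ _ _
      _ ≤ 1 := le_of_lt hy.2
    simpa using ht hy'
  choose f hf1 hf2 using hmem
  exact Finset.card_le_card_of_injOn (fun y => if h : y ∈ Y.filter (fun y => dist y x < 1) then f y h else x)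
    (by intro a ha'; have ha : a ∈ Y.filter (fun y => dist y x < 1) := ha'; simp only [dif_pos ha]; exact hf1 a ha)
    (by
      intro a ha' b hb' hab
      have ha : a ∈ Y.filter (fun y => dist y x < 1) := ha'
      have hb : b ∈ Y.filter (fun y => dist y x < 1) := hb'
      simp only [dif_pos ha, dif_pos hb] at hab
      by_contra hne
      have h1 := hf2 a ha
      have h2 := hf2 b hb
      rw [hab] at h1
      have hlt : dist (a - x) (b - x) < 1 := by
        calc dist (a-x) (b-x) ≤ dist (a-x) (f b hb) + dist (f b hb) (b-x) := dist_triangle _ _ _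
        _ < 1/2 + 1/2 := by
            rw [mem_ball] at h1 h2
            exact add_lt_add h1 (by rw [dist_comm]; exact h2)
        _ = 1 := by norm_num
      rw [dist_sub_right] at hlt
      have := hsep a (Finset.mem_filter.1 ha).1 b (Finset.mem_filter.1 hb).1 hne
      linarith)

lemma sumg {d : ℕ} (c : ℝ) (N : ℕ) (g : EuclideanSpace ℝ (Fin d) → ℝ)
    (hball : ∀ x, ‖x‖ < 1 → g x = -1)
    (hsum : ∀ X : Finset (EuclideanSpace ℝ (Fin d)),
      (∀ x ∈ X, 1 ≤ ‖x‖) → (∀ x ∈ X, ∀ y ∈ X, x ≠ y → 1 ≤ dist x y) →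
      ∑ x ∈ X, |g x| ≤ c)
    (hN : ∀ (Y : Finset (EuclideanSpace ℝ (Fin d))) (x : EuclideanSpace ℝ (Fin d)),
      (∀ u ∈ Y, ∀ v ∈ Y, u ≠ v → 1 ≤ dist u v) →
      (Y.filter (fun y => dist y x < 1)).card ≤ N) :
    ∀ (Y : Finset (EuclideanSpace ℝ (Fin d))) (x₀ : EuclideanSpace ℝ (Fin d)),
      (∀ u ∈ Y, ∀ v ∈ Y, u ≠ v → 1 ≤ dist u v) →
      ∑ y ∈ Y, |g (y - x₀)| ≤ N + c := by
  classical
  intro Y x₀ hsep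
  rw [← Finset.sum_filter_add_sum_filter_not Y (fun y => dist y x₀ < 1)]
  have hnear : ∑ y ∈ Y.filter (fun y => dist y x₀ < 1), |g (y - x₀)| ≤ (N : ℝ) := by
    have : ∀ y ∈ Y.filter (fun y => dist y x₀ < 1), |g (y - x₀)| = 1 := by
      intro y hy
      have : ‖y - x₀‖ < 1 := by
        rw [← dist_eq_norm]; exact (Finset.mem_filter.1 hy).2
      rw [hball _ this]; norm_num
    rw [Finset.sum_congr rfl this, Finset.sum_const, nsmul_eq_mul, mul_one]
    exact_mod_cast hN Y x₀ hsep
  have hfar : ∑ y ∈ Y.filter (fun y => ¬ dist y x₀ < 1), |g (y - x₀)| ≤ c := by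
    have himg : ∑ x ∈ ((Y.filter (fun y => ¬ dist y x₀ < 1)).image (fun y => y - x₀)), |g x|
        = ∑ y ∈ Y.filter (fun y => ¬ dist y x₀ < 1), |g (y - x₀)| :=
      Finset.sum_image (fun u _ v _ h => sub_left_injective h)
    rw [← himg]
    apply hsum
    · intro x hx
      obtain ⟨y, hy, rfl⟩ := Finset.mem_image.1 hx
      have := (Finset.mem_filter.1 hy).2
      rw [← dist_eq_norm]; exact not_lt.1 this
    · intro x hx y hy hxy
      obtain ⟨u, hu, rfl⟩ := Finset.mem_image.1 hx
      obtain ⟨v, hv, rfl⟩ := Finset.mem_image.1 hy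
      rw [dist_sub_right]
      exact hsep u (Finset.mem_filter.1 hu).1 v (Finset.mem_filter.1 hv).1
        (fun h => hxy (by rw [h]))
  linarith


def glue {d n : ℕ} (S : Finset (Fin n)) (u : Fin S.card → EuclideanSpace ℝ (Fin d))
    (v : Fin Sᶜ.card → EuclideanSpace ℝ (Fin d)) : Fin n → EuclideanSpace ℝ (Fin d) :=
  fun j => if h : j ∈ S then u ((S.orderIsoOfFin rfl).symm ⟨j, h⟩)
    else v ((Sᶜ.orderIsoOfFin rfl).symm ⟨j, Finset.mem_compl.2 h⟩)

lemma glue_left {d n : ℕ} (S : Finset (Fin n)) (u : Fin S.card → EuclideanSpace ℝ (Fin d))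
    (v : Fin Sᶜ.card → EuclideanSpace ℝ (Fin d)) : subseqVals (glue S u v) S = u := by
  funext i
  have h : (S.orderIsoOfFin rfl i : Fin n) ∈ S := (S.orderIsoOfFin rfl i).2
  simp only [subseqVals, glue, dif_pos h, Subtype.coe_eta, OrderIso.symm_apply_apply]

lemma glue_right {d n : ℕ} (S : Finset (Fin n)) (u : Fin S.card → EuclideanSpace ℝ (Fin d))
    (v : Fin Sᶜ.card → EuclideanSpace ℝ (Fin d)) : subseqVals (glue S u v) Sᶜ = v := by
  funext i
  have h : (Sᶜ.orderIsoOfFin rfl i : Fin n) ∉ S :=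
    Finset.mem_compl.1 (Sᶜ.orderIsoOfFin rfl i).2
  simp only [subseqVals, glue, dif_neg h, Subtype.coe_eta, OrderIso.symm_apply_apply]

lemma glue_eq {d n : ℕ} (S : Finset (Fin n)) (y : Fin n → EuclideanSpace ℝ (Fin d)) :
    glue S (subseqVals y S) (subseqVals y Sᶜ) = y := by
  funext j
  by_cases h : j ∈ S
  · simp only [glue, dif_pos h, subseqVals, OrderIso.apply_symm_apply]
  · simp only [glue, dif_neg h, subseqVals, OrderIso.apply_symm_apply]

lemma sum_glue {d n : ℕ} (Y : Fin n → Finset (EuclideanSpace ℝ (Fin d)))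
    (S : Finset (Fin n)) (F : (Fin n → EuclideanSpace ℝ (Fin d)) → ℝ) :
    ∑ y ∈ Fintype.piFinset Y, F y =
      ∑ u ∈ Fintype.piFinset (fun i => Y (S.orderIsoOfFin rfl i : Fin n)),
        ∑ v ∈ Fintype.piFinset (fun i => Y (Sᶜ.orderIsoOfFin rfl i : Fin n)),
          F (glue S u v) := by
  classical
  rw [← Finset.sum_product']
  refine Finset.sum_bij' (fun y _ => (subseqVals y S, subseqVals y Sᶜ))
    (fun p _ => glue S p.1 p.2) ?_ ?_ ?_ ?_ ?_
  · intro y hy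
    rw [Finset.mem_product]
    constructor <;> · rw [Fintype.mem_piFinset]; intro i; exact Fintype.mem_piFinset.1 hy _
  · intro p hp
    rw [Fintype.mem_piFinset]
    intro j
    rw [Finset.mem_product] at hp
    by_cases h : j ∈ S
    · have := Fintype.mem_piFinset.1 hp.1 ((S.orderIsoOfFin rfl).symm ⟨j, h⟩)
      simpa only [glue, dif_pos h, OrderIso.apply_symm_apply] using this
    · have := Fintype.mem_piFinset.1 hp.2 ((Sᶜ.orderIsoOfFin rfl).symm ⟨j, Finset.mem_compl.2 h⟩)
      simpa only [glue, dif_neg h, OrderIso.apply_symm_apply] using this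
  · intro y _; exact glue_eq S y
  · intro p _; exact Prod.ext (glue_left S p.1 p.2) (glue_right S p.1 p.2)
  · intro y _; rw [glue_eq]

lemma prod_subseq {n : ℕ} (S : Finset (Fin n)) (f : Fin n → ℝ) :
    ∏ i : Fin S.card, f (S.orderIsoOfFin rfl i : Fin n) = ∏ j ∈ S, f j := by
  rw [← Finset.prod_coe_sort S f]
  exact Fintype.prod_equiv (S.orderIsoOfFin rfl).toEquiv _ _ (fun i => rfl)

lemma comb_sum (n : ℕ) (D : ℝ) (hD : 0 ≤ D) :
    ∑ S : Finset (Fin n), D ^ S.card * ((n - S.card).factorial : ℝ)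
      ≤ (n.factorial : ℝ) * Real.exp D := by
  rw [← Finset.powerset_univ, Finset.sum_powerset]
  have h1 : ∀ j ∈ Finset.range ((univ : Finset (Fin n)).card + 1),
      ∑ S ∈ Finset.powersetCard j (univ : Finset (Fin n)),
        D ^ S.card * ((n - S.card).factorial : ℝ)
      = (n.choose j : ℝ) * (D ^ j * ((n - j).factorial : ℝ)) := by
    intro j _
    rw [Finset.sum_powersetCard j (univ : Finset (Fin n))
      (fun k => D ^ k * ((n - k).factorial : ℝ))]
    simp [nsmul_eq_mul]
  rw [Finset.sum_congr rfl h1]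
  have hcard : (univ : Finset (Fin n)).card = n := by simp
  rw [hcard]
  have h2 : ∀ j ∈ Finset.range (n + 1),
      (n.choose j : ℝ) * (D ^ j * ((n - j).factorial : ℝ))
      = (n.factorial : ℝ) * (D ^ j / (j.factorial : ℝ)) := by
    intro j hj
    have hjn : j ≤ n := Nat.lt_succ_iff.1 (Finset.mem_range.1 hj)
    have hfact : (n.choose j : ℝ) * (j.factorial : ℝ) * ((n - j).factorial : ℝ)
        = (n.factorial : ℝ) := by
      exact_mod_cast congrArg (Nat.cast : ℕ → ℝ) (Nat.choose_mul_factorial_mul_factorial hjn)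
    have hj0 : (0:ℝ) < (j.factorial : ℝ) := by exact_mod_cast j.factorial_pos
    have hdiv : (n.choose j : ℝ) * ((n - j).factorial : ℝ) = (n.factorial : ℝ) / (j.factorial : ℝ) := by
      field_simp
      nlinarith [hfact]
    calc (n.choose j : ℝ) * (D ^ j * ((n - j).factorial : ℝ))
        = ((n.choose j : ℝ) * ((n - j).factorial : ℝ)) * D ^ j := by ring
      _ = ((n.factorial : ℝ) / (j.factorial : ℝ)) * D ^ j := by rw [hdiv]
      _ = (n.factorial : ℝ) * (D ^ j / (j.factorial : ℝ)) := by ring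
  rw [Finset.sum_congr rfl h2, ← Finset.mul_sum]
  have := Real.sum_le_exp_of_nonneg hD (n + 1)
  have hn0 : (0:ℝ) ≤ n.factorial := by positivity
  nlinarith [this]
lemma vanish {d : ℕ} (g : EuclideanSpace ℝ (Fin d) → ℝ)
    (phiT : ∀ m : ℕ, (Fin m → EuclideanSpace ℝ (Fin d)) →
      ∀ n : ℕ, (Fin n → EuclideanSpace ℝ (Fin d)) → ℝ)
    (hball : ∀ x, ‖x‖ < 1 → g x = -1)
    (hrec : ∀ (m : ℕ) (X : Fin (m + 1) → EuclideanSpace ℝ (Fin d)) (n : ℕ)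
        (Y : Fin n → EuclideanSpace ℝ (Fin d)),
      phiT (m + 1) X n Y =
        (∏ i : Fin m, (g (X i.succ - X 0) + 1)) *
          ∑ S : Finset (Fin n),
            (∏ j ∈ S, g (Y j - X 0)) *
              phiT (S.card + m) (Fin.append (subseqVals Y S) (Fin.tail X))
                Sᶜ.card (subseqVals Y Sᶜ)) :
    ∀ (K m : ℕ) (X : Fin m → EuclideanSpace ℝ (Fin d)) (n : ℕ)
      (Y : Fin n → EuclideanSpace ℝ (Fin d)), 2 * n + m ≤ K →
      (∃ i j : Fin m, i ≠ j ∧ dist (X i) (X j) < 1) → phiT m X n Y = 0 := by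
  intro K
  induction K using Nat.strong_induction_on with
  | _ K IH =>
    rintro m X n Y hK ⟨i, j, hij, hd⟩
    match m with
    | 0 => exact absurd i.pos (by simp)
    | m + 1 =>
      rw [hrec]
      have hzero : ∀ a : Fin m, dist (X a.succ) (X 0) < 1 → g (X a.succ - X 0) + 1 = 0 := by
        intro a ha
        rw [hball _ (by rw [← dist_eq_norm]; exact ha)]; ring
      rcases Fin.eq_zero_or_eq_succ i with hi | ⟨a, rfl⟩
      · rcases Fin.eq_zero_or_eq_succ j with hj | ⟨b, rfl⟩
        · exact absurd (hi.trans hj.symm) hij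
        · rw [Finset.prod_eq_zero (Finset.mem_univ b) (hzero b (by rw [← hi, dist_comm]; exact hd)),
            zero_mul]
      · rcases Fin.eq_zero_or_eq_succ j with hj | ⟨b, rfl⟩
        · rw [Finset.prod_eq_zero (Finset.mem_univ a) (hzero a (by rw [← hj]; exact hd)), zero_mul]
        · have hab : a ≠ b := fun h => hij (by rw [h])
          have hsum0 : ∀ S : Finset (Fin n),
              phiT (S.card + m) (Fin.append (subseqVals Y S) (Fin.tail X))
                Sᶜ.card (subseqVals Y Sᶜ) = 0 := by
            intro S
            apply IH (2 * Sᶜ.card + (S.card + m))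
            · have h1 : S.card + Sᶜ.card = n := by
                rw [Finset.card_add_card_compl]; simp
              omega
            · rfl
            · refine ⟨Fin.natAdd S.card a, Fin.natAdd S.card b, ?_, ?_⟩
              · intro h
                apply hab
                have := congrArg Fin.val h
                simp only [Fin.natAdd] at this
                exact Fin.ext (by omega)
              · rw [Fin.append_right, Fin.append_right]
                exact hd
          rw [Finset.sum_congr rfl (fun S _ => by rw [hsum0 S, mul_zero]),
            Finset.sum_const, smul_zero, mul_zero]

lemma mainbound {d : ℕ} (c : ℝ) (hc0 : 0 ≤ c) (N : ℕ)
    (hN : ∀ (Y : Finset (EuclideanSpace ℝ (Fin d))) (x : EuclideanSpace ℝ (Fin d)),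
      (∀ u ∈ Y, ∀ v ∈ Y, u ≠ v → 1 ≤ dist u v) →
      (Y.filter (fun y => dist y x < 1)).card ≤ N)
    (g : EuclideanSpace ℝ (Fin d) → ℝ)
    (phiT : ∀ m : ℕ, (Fin m → EuclideanSpace ℝ (Fin d)) →
      ∀ n : ℕ, (Fin n → EuclideanSpace ℝ (Fin d)) → ℝ)
    (hball : ∀ x, ‖x‖ < 1 → g x = -1)
    (hsum : ∀ X : Finset (EuclideanSpace ℝ (Fin d)),
      (∀ x ∈ X, 1 ≤ ‖x‖) → (∀ x ∈ X, ∀ y ∈ X, x ≠ y → 1 ≤ dist x y) →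
      ∑ x ∈ X, |g x| ≤ c)
    (h0 : ∀ (X : Fin 0 → EuclideanSpace ℝ (Fin d)) (n : ℕ)
        (Y : Fin n → EuclideanSpace ℝ (Fin d)),
      phiT 0 X n Y = if n = 0 then 1 else 0)
    (hrec : ∀ (m : ℕ) (X : Fin (m + 1) → EuclideanSpace ℝ (Fin d)) (n : ℕ)
        (Y : Fin n → EuclideanSpace ℝ (Fin d)),
      phiT (m + 1) X n Y =
        (∏ i : Fin m, (g (X i.succ - X 0) + 1)) *
          ∑ S : Finset (Fin n),
            (∏ j ∈ S, g (Y j - X 0)) *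
              phiT (S.card + m) (Fin.append (subseqVals Y S) (Fin.tail X))
                Sᶜ.card (subseqVals Y Sᶜ)) :
    ∀ (K m n : ℕ) (x : Fin m → EuclideanSpace ℝ (Fin d))
      (Y : Fin n → Finset (EuclideanSpace ℝ (Fin d))),
      2 * n + m ≤ K →
      (∀ j, ∀ u ∈ Y j, ∀ v ∈ Y j, u ≠ v → 1 ≤ dist u v) →
      ∑ y ∈ Fintype.piFinset Y, |phiT m x n y|
        ≤ n.factorial * (Real.exp ((N:ℝ) + 2*c)) ^ (m + n) := by
  classical
  have hq0 : (0:ℝ) < Real.exp ((N:ℝ) + 2*c) := Real.exp_pos _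
  intro K
  induction K using Nat.strong_induction_on with
  | _ K IH =>
  intro m n x Y hK hsep
  match m with
  | 0 =>
    simp only [h0]
    by_cases hn : n = 0
    · subst hn
      have hcard : (Fintype.piFinset Y).card = 1 := by
        rw [Fintype.card_piFinset]; simp
      simp [hcard]
    · simp only [if_neg hn, abs_zero, Finset.sum_const, smul_zero]
      positivity
  | m + 1 =>
    by_cases hclose : ∃ i j : Fin (m+1), i ≠ j ∧ dist (x i) (x j) < 1
    · have hv : ∀ y : Fin n → EuclideanSpace ℝ (Fin d), phiT (m+1) x n y = 0 :=
        fun y => vanish g phiT hball hrec (2*n+(m+1)) (m+1) x n y le_rfl hclose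
      simp only [hv, abs_zero, Finset.sum_const, smul_zero]
      positivity
    · push_neg at hclose
      have hsep' : ∀ (a b : Fin m), a ≠ b → x a.succ ≠ x b.succ := by
        intro a b hab h
        have h1 := hclose a.succ b.succ (fun hh => hab (Fin.succ_injective _ hh))
        rw [h] at h1
        simp at h1
        linarith
      have htailsum : ∑ i : Fin m, |g (x i.succ - x 0)| ≤ c := by
        have himg : ∑ z ∈ (univ : Finset (Fin m)).image (fun i => x i.succ - x 0), |g z|
            = ∑ i : Fin m, |g (x i.succ - x 0)| :=
          Finset.sum_image (by
            intro a _ b _ h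
            by_contra hab
            exact hsep' a b hab (sub_left_injective h))
        rw [← himg]
        apply hsum
        · intro z hz
          obtain ⟨i, _, rfl⟩ := Finset.mem_image.1 hz
          rw [← dist_eq_norm]
          exact hclose i.succ 0 (Fin.succ_ne_zero i)
        · intro z1 h1 z2 h2 h12
          obtain ⟨a, _, rfl⟩ := Finset.mem_image.1 h1
          obtain ⟨b, _, rfl⟩ := Finset.mem_image.1 h2
          rw [dist_sub_right]
          exact hclose a.succ b.succ (fun hh => h12 (by rw [hh]))
      have hprod : |∏ i : Fin m, (g (x i.succ - x 0) + 1)| ≤ Real.exp c := by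
        rw [Finset.abs_prod]
        calc ∏ i : Fin m, |g (x i.succ - x 0) + 1|
            ≤ ∏ i : Fin m, Real.exp |g (x i.succ - x 0)| := by
              apply Finset.prod_le_prod (fun _ _ => abs_nonneg _)
              intro i _
              have h1 : |g (x i.succ - x 0) + 1| ≤ |g (x i.succ - x 0)| + 1 := by
                calc |g (x i.succ - x 0) + 1| ≤ |g (x i.succ - x 0)| + |(1:ℝ)| := abs_add_le _ _
                _ = |g (x i.succ - x 0)| + 1 := by rw [abs_one]
              have h2 := Real.add_one_le_exp (|g (x i.succ - x 0)|)
              linarith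
          _ = Real.exp (∑ i : Fin m, |g (x i.succ - x 0)|) := by rw [Real.exp_sum]
          _ ≤ Real.exp c := Real.exp_le_exp.2 htailsum
      have hpt : ∀ y : Fin n → EuclideanSpace ℝ (Fin d), |phiT (m+1) x n y| ≤
          Real.exp c * ∑ S : Finset (Fin n), (∏ j ∈ S, |g (y j - x 0)|) *
            |phiT (S.card + m) (Fin.append (subseqVals y S) (Fin.tail x))
              Sᶜ.card (subseqVals y Sᶜ)| := by
        intro y
        rw [hrec, abs_mul]
        apply mul_le_mul hprod ?_ (abs_nonneg _) (Real.exp_pos c).le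
        calc |∑ S : Finset (Fin n), (∏ j ∈ S, g (y j - x 0)) *
              phiT (S.card + m) (Fin.append (subseqVals y S) (Fin.tail x))
                Sᶜ.card (subseqVals y Sᶜ)|
            ≤ ∑ S : Finset (Fin n), |(∏ j ∈ S, g (y j - x 0)) *
              phiT (S.card + m) (Fin.append (subseqVals y S) (Fin.tail x))
                Sᶜ.card (subseqVals y Sᶜ)| := Finset.abs_sum_le_sum_abs _ _
          _ = ∑ S : Finset (Fin n), (∏ j ∈ S, |g (y j - x 0)|) *
              |phiT (S.card + m) (Fin.append (subseqVals y S) (Fin.tail x))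
                Sᶜ.card (subseqVals y Sᶜ)| := by
              refine Finset.sum_congr rfl fun S _ => ?_
              rw [abs_mul, Finset.abs_prod]
      have hS : ∀ S : Finset (Fin n),
          ∑ y ∈ Fintype.piFinset Y, (∏ j ∈ S, |g (y j - x 0)|) *
            |phiT (S.card + m) (Fin.append (subseqVals y S) (Fin.tail x))
              Sᶜ.card (subseqVals y Sᶜ)|
          ≤ ((N:ℝ) + c) ^ S.card * ((n - S.card).factorial : ℝ)
              * (Real.exp ((N:ℝ) + 2*c)) ^ (m + n) := by
        intro S
        have hcards : S.card + Sᶜ.card = n := by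
          rw [Finset.card_add_card_compl]; simp
        rw [sum_glue Y S]
        have hkey : ∀ (u : Fin S.card → EuclideanSpace ℝ (Fin d))
            (v : Fin Sᶜ.card → EuclideanSpace ℝ (Fin d)),
            (∏ j ∈ S, |g (glue S u v j - x 0)|) *
              |phiT (S.card + m) (Fin.append (subseqVals (glue S u v) S) (Fin.tail x))
                Sᶜ.card (subseqVals (glue S u v) Sᶜ)|
            = (∏ i : Fin S.card, |g (u i - x 0)|) *
              |phiT (S.card + m) (Fin.append u (Fin.tail x)) Sᶜ.card v| := by
          intro u v
          rw [glue_left, glue_right]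
          congr 1
          rw [← prod_subseq S (fun j => |g (glue S u v j - x 0)|)]
          refine Finset.prod_congr rfl fun i _ => ?_
          have h := congrFun (glue_left S u v) i
          simp only [subseqVals] at h
          rw [h]
        rw [Finset.sum_congr rfl (fun u _ => Finset.sum_congr rfl (fun v _ => hkey u v))]
        have hIHv : ∀ u : Fin S.card → EuclideanSpace ℝ (Fin d),
            ∑ v ∈ Fintype.piFinset (fun i => Y (Sᶜ.orderIsoOfFin rfl i : Fin n)),
              |phiT (S.card + m) (Fin.append u (Fin.tail x)) Sᶜ.card v|
            ≤ ((n - S.card).factorial : ℝ) * (Real.exp ((N:ℝ) + 2*c)) ^ (m + n) := by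
          intro u
          have hlt : 2 * Sᶜ.card + (S.card + m) < K := by omega
          have := IH (2 * Sᶜ.card + (S.card + m)) hlt (S.card + m) Sᶜ.card
            (Fin.append u (Fin.tail x)) (fun i => Y (Sᶜ.orderIsoOfFin rfl i : Fin n))
            le_rfl (fun j => hsep _)
          have hxx : S.card + m + Sᶜ.card = m + n := by omega
          have hfc : (Sᶜ.card).factorial = (n - S.card).factorial := by
            congr 1; omega
          rw [hxx, hfc] at this
          exact this
        calc ∑ u ∈ Fintype.piFinset (fun i => Y (S.orderIsoOfFin rfl i : Fin n)),
              ∑ v ∈ Fintype.piFinset (fun i => Y (Sᶜ.orderIsoOfFin rfl i : Fin n)),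
                (∏ i : Fin S.card, |g (u i - x 0)|) *
                  |phiT (S.card + m) (Fin.append u (Fin.tail x)) Sᶜ.card v|
            = ∑ u ∈ Fintype.piFinset (fun i => Y (S.orderIsoOfFin rfl i : Fin n)),
                (∏ i : Fin S.card, |g (u i - x 0)|) *
                  ∑ v ∈ Fintype.piFinset (fun i => Y (Sᶜ.orderIsoOfFin rfl i : Fin n)),
                    |phiT (S.card + m) (Fin.append u (Fin.tail x)) Sᶜ.card v| := by
              refine Finset.sum_congr rfl fun u _ => ?_
              rw [Finset.mul_sum]
          _ ≤ ∑ u ∈ Fintype.piFinset (fun i => Y (S.orderIsoOfFin rfl i : Fin n)),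
                (∏ i : Fin S.card, |g (u i - x 0)|) *
                  (((n - S.card).factorial : ℝ) * (Real.exp ((N:ℝ) + 2*c)) ^ (m + n)) :=
              Finset.sum_le_sum fun u _ => mul_le_mul_of_nonneg_left (hIHv u)
                (Finset.prod_nonneg fun _ _ => abs_nonneg _)
          _ = (∑ u ∈ Fintype.piFinset (fun i => Y (S.orderIsoOfFin rfl i : Fin n)),
                ∏ i : Fin S.card, |g (u i - x 0)|) *
                  (((n - S.card).factorial : ℝ) * (Real.exp ((N:ℝ) + 2*c)) ^ (m + n)) := by
              rw [← Finset.sum_mul]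
          _ ≤ ((N:ℝ) + c) ^ S.card *
                  (((n - S.card).factorial : ℝ) * (Real.exp ((N:ℝ) + 2*c)) ^ (m + n)) := by
              apply mul_le_mul_of_nonneg_right ?_ (by positivity)
              rw [← Finset.prod_univ_sum (fun i => Y (S.orderIsoOfFin rfl i : Fin n))
                (fun i z => |g (z - x 0)|)]
              calc ∏ i : Fin S.card, ∑ z ∈ Y (S.orderIsoOfFin rfl i : Fin n), |g (z - x 0)|
                  ≤ ∏ i : Fin S.card, ((N:ℝ) + c) :=
                    Finset.prod_le_prod
                      (fun _ _ => Finset.sum_nonneg fun _ _ => abs_nonneg _)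
                      (fun i _ => sumg c N g hball hsum hN _ (x 0) (hsep _))
                _ = ((N:ℝ) + c) ^ S.card := by
                    rw [Finset.prod_const]; simp
          _ = ((N:ℝ) + c) ^ S.card * ((n - S.card).factorial : ℝ)
                * (Real.exp ((N:ℝ) + 2*c)) ^ (m + n) := by ring
      have he : Real.exp c * Real.exp ((N:ℝ) + c) = Real.exp ((N:ℝ) + 2*c) := by
        rw [← Real.exp_add]; congr 1; ring
      calc ∑ y ∈ Fintype.piFinset Y, |phiT (m+1) x n y|
          ≤ ∑ y ∈ Fintype.piFinset Y, Real.exp c *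
              ∑ S : Finset (Fin n), (∏ j ∈ S, |g (y j - x 0)|) *
                |phiT (S.card + m) (Fin.append (subseqVals y S) (Fin.tail x))
                  Sᶜ.card (subseqVals y Sᶜ)| := Finset.sum_le_sum fun y _ => hpt y
        _ = Real.exp c * ∑ S : Finset (Fin n), ∑ y ∈ Fintype.piFinset Y,
              (∏ j ∈ S, |g (y j - x 0)|) *
                |phiT (S.card + m) (Fin.append (subseqVals y S) (Fin.tail x))
                  Sᶜ.card (subseqVals y Sᶜ)| := by
            rw [← Finset.mul_sum, Finset.sum_comm]
        _ ≤ Real.exp c * ∑ S : Finset (Fin n), ((N:ℝ) + c) ^ S.card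
              * ((n - S.card).factorial : ℝ) * (Real.exp ((N:ℝ) + 2*c)) ^ (m + n) :=
            mul_le_mul_of_nonneg_left (Finset.sum_le_sum fun S _ => hS S) (Real.exp_pos c).le
        _ = Real.exp c * ((∑ S : Finset (Fin n), ((N:ℝ) + c) ^ S.card
              * ((n - S.card).factorial : ℝ)) * (Real.exp ((N:ℝ) + 2*c)) ^ (m + n)) := by
            rw [Finset.sum_mul]
        _ ≤ Real.exp c * (((n.factorial : ℝ) * Real.exp ((N:ℝ) + c))
              * (Real.exp ((N:ℝ) + 2*c)) ^ (m + n)) := by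
            apply mul_le_mul_of_nonneg_left ?_ (Real.exp_pos c).le
            apply mul_le_mul_of_nonneg_right (comb_sum n ((N:ℝ) + c) (by positivity))
              (by positivity)
        _ = (n.factorial : ℝ) * ((Real.exp ((N:ℝ) + 2*c)) ^ (m + n)
              * (Real.exp c * Real.exp ((N:ℝ) + c))) := by ring
        _ = (n.factorial : ℝ) * (Real.exp ((N:ℝ) + 2*c)) ^ (m + 1 + n) := by
            rw [he, show m + 1 + n = (m + n) + 1 from by omega, pow_succ]

/-- there is a constant `q₁` depending only on `c` and the dimension
such that, for any `g` satisfying the hard-core assumptions with `a = c < 1`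
(`g` even, `g ≥ -c` off the unit ball, `g = -1` on it, `∑_{x∈X}|g x| ≤ c`
for `X ∈ C₀`) and `φ̃` the family of functions determined by the recurrence
`φ̃_X(Y) = ∏_{i≥2}(g(xᵢ-x₁)+1) ∑_{Z⊆Y} ∏_j g(zⱼ-x₁) · φ̃_{Z∪(X\x₁)}(Y\Z)`
(with `φ̃_∅ = 𝟏`), one has
`r(m,n) = sup_X sup_{Y₁,…,Yₙ∈C} ∑_{y₁∈Y₁}⋯∑_{yₙ∈Yₙ} |φ̃_X(y)| ≤ n!·q₁^{m+n}`. -/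
theorem stmt_14 (d : ℕ) (c : ℝ) (hc0 : 0 ≤ c) (hc : c < 1) :
    ∃ q₁ : ℝ, 0 < q₁ ∧
      ∀ (g : EuclideanSpace ℝ (Fin d) → ℝ)
        (phiT : ∀ m : ℕ, (Fin m → EuclideanSpace ℝ (Fin d)) →
          ∀ n : ℕ, (Fin n → EuclideanSpace ℝ (Fin d)) → ℝ),
        (∀ x, g (-x) = g x) →
        (∀ x, 1 ≤ ‖x‖ → -c ≤ g x) →
        (∀ x, ‖x‖ < 1 → g x = -1) →
        (∀ X : Finset (EuclideanSpace ℝ (Fin d)),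
          (∀ x ∈ X, 1 ≤ ‖x‖) → (∀ x ∈ X, ∀ y ∈ X, x ≠ y → 1 ≤ dist x y) →
          ∑ x ∈ X, |g x| ≤ c) →
        (∀ (X : Fin 0 → EuclideanSpace ℝ (Fin d)) (n : ℕ)
            (Y : Fin n → EuclideanSpace ℝ (Fin d)),
          phiT 0 X n Y = if n = 0 then 1 else 0) →
        (∀ (m : ℕ) (X : Fin (m + 1) → EuclideanSpace ℝ (Fin d)) (n : ℕ)
            (Y : Fin n → EuclideanSpace ℝ (Fin d)),
          phiT (m + 1) X n Y =
            (∏ i : Fin m, (g (X i.succ - X 0) + 1)) *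
              ∑ S : Finset (Fin n),
                (∏ j ∈ S, g (Y j - X 0)) *
                  phiT (S.card + m) (Fin.append (subseqVals Y S) (Fin.tail X))
                    Sᶜ.card (subseqVals Y Sᶜ)) →
        ∀ (m n : ℕ) (x : Fin m → EuclideanSpace ℝ (Fin d))
          (Y : Fin n → Finset (EuclideanSpace ℝ (Fin d))),
          (∀ j, ∀ u ∈ Y j, ∀ v ∈ Y j, u ≠ v → 1 ≤ dist u v) →
          ∑ y ∈ Fintype.piFinset Y, |phiT m x n y| ≤ n.factorial * q₁ ^ (m + n) := by
  obtain ⟨N, hN⟩ := packing d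
  refine ⟨Real.exp ((N:ℝ) + 2*c), Real.exp_pos _, ?_⟩
  intro g phiT heven hfar hball hsum h0 hrec m n x Y hsep
  exact mainbound c hc0 N hN g phiT hball hsum h0 hrec (2*n+m) m n x Y le_rfl hsep

end
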